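/- Let k, l ∈ ℝ with cos k ≠ cos l, and let φ = φ(k,l) = arccos( (cos k + cos l)/2 ) (so |cos φ| < 1 and sin φ > 0). Set x = sin k / (2 sin φ) and y = sin l / (2 sin φ). Then x² + y² < 1/2, and the determinant of the 2×2 Hessian matrix of φ(k,l) satisfies det(Hess φ)(k,l) = −(1/4)(1 − (x+y)²)(1 − (x−y)²) = −(1/4)(x+y−1)(x+y+1)(x−y+1)(x−y−1); in particular det(Hess φ)(k,l) < 0. (This identity yields the limit density ρ₂(x,y) = 2·1_{{x²+y²≤1/2}} / (π² (x+y−1)(x+y+1)(x−y+1)(x−y−1)) of the Grover walk on ℤ².) -/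

import Mathlib

/-- `φ(k,l) = arccos((cos k + cos l)/2)` for the simple random walk on `ℤ²`. -/
noncomputable def rwPhase2 (p : ℝ × ℝ) : ℝ :=
  Real.arccos ((Real.cos p.1 + Real.cos p.2) / 2)

/-- the standard basis of `ℝ × ℝ` -/
def basis2 : Fin 2 → ℝ × ℝ := ![(1, 0), (0, 1)]

/-- the Hessian matrix of a function on `ℝ × ℝ` -/
noncomputable def hessian2 (f : ℝ × ℝ → ℝ) (p : ℝ × ℝ) : Matrix (Fin 2) (Fin 2) ℝ :=
  Matrix.of fun a b =>
    fderiv ℝ (fun q => fderiv ℝ f q (basis2 b)) p (basis2 a)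

/- ### Auxiliary machinery -/

/-- the argument of arccos -/
noncomputable def uf (q : ℝ × ℝ) : ℝ := (Real.cos q.1 + Real.cos q.2) / 2

/-- `sin φ` as a function of the point -/
noncomputable def wf (q : ℝ × ℝ) : ℝ := Real.sqrt (1 - uf q ^ 2)

lemma hasFDerivAt_uf (q : ℝ × ℝ) :
    HasFDerivAt uf ((-Real.sin q.1 / 2) • ContinuousLinearMap.fst ℝ ℝ ℝ +
      (-Real.sin q.2 / 2) • ContinuousLinearMap.snd ℝ ℝ ℝ) q := by
  have h1 : HasFDerivAt (fun q : ℝ × ℝ => Real.cos q.1)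
      ((-Real.sin q.1) • ContinuousLinearMap.fst ℝ ℝ ℝ) q :=
    (Real.hasDerivAt_cos q.1).comp_hasFDerivAt q hasFDerivAt_fst
  have h2 : HasFDerivAt (fun q : ℝ × ℝ => Real.cos q.2)
      ((-Real.sin q.2) • ContinuousLinearMap.snd ℝ ℝ ℝ) q :=
    (Real.hasDerivAt_cos q.2).comp_hasFDerivAt q hasFDerivAt_snd
  have h3 := (h1.add h2).const_mul (2⁻¹ : ℝ)
  have hfun : uf = fun q : ℝ × ℝ => (2⁻¹ : ℝ) * (Real.cos q.1 + Real.cos q.2) := by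
    funext q; simp [uf]; ring
  rw [hfun]
  refine h3.congr_fderiv ?_
  ext <;> simp <;> ring

lemma uf_lt (q : ℝ × ℝ) (h : Real.cos q.1 ≠ Real.cos q.2) : uf q ^ 2 < 1 := by
  have h1 := Real.neg_one_le_cos q.1
  have h2 := Real.cos_le_one q.1
  have h3 := Real.neg_one_le_cos q.2
  have h4 := Real.cos_le_one q.2
  have h6 : Real.cos q.1 - Real.cos q.2 ≠ 0 := sub_ne_zero.2 h
  have h5 : (Real.cos q.1 - Real.cos q.2) ^ 2 > 0 := by positivity
  unfold uf
  nlinarith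

lemma wf_pos (q : ℝ × ℝ) (h : Real.cos q.1 ≠ Real.cos q.2) : 0 < wf q :=
  Real.sqrt_pos.2 (by linarith [uf_lt q h])

lemma wf_sq (q : ℝ × ℝ) (h : Real.cos q.1 ≠ Real.cos q.2) : wf q ^ 2 = 1 - uf q ^ 2 :=
  Real.sq_sqrt (by linarith [uf_lt q h])

lemma hasFDerivAt_rwPhase2 (q : ℝ × ℝ) (h : Real.cos q.1 ≠ Real.cos q.2) :
    HasFDerivAt rwPhase2
      ((Real.sin q.1 / (2 * wf q)) • ContinuousLinearMap.fst ℝ ℝ ℝ +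
        (Real.sin q.2 / (2 * wf q)) • ContinuousLinearMap.snd ℝ ℝ ℝ) q := by
  have hlt := uf_lt q h
  have h1 : uf q ≠ -1 := by intro hc; rw [hc] at hlt; norm_num at hlt
  have h2 : uf q ≠ 1 := by intro hc; rw [hc] at hlt; norm_num at hlt
  have harc := (Real.hasDerivAt_arccos h1 h2).comp_hasFDerivAt q (hasFDerivAt_uf q)
  have hrw : rwPhase2 = Real.arccos ∘ uf := rfl
  rw [hrw]
  refine harc.congr_fderiv ?_
  have hw : wf q ≠ 0 := ne_of_gt (wf_pos q h)
  ext <;> simp [wf] <;> field_simp <;> ring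

lemma fderiv_rwPhase2 (q : ℝ × ℝ) (h : Real.cos q.1 ≠ Real.cos q.2) :
    fderiv ℝ rwPhase2 q =
      (Real.sin q.1 / (2 * wf q)) • ContinuousLinearMap.fst ℝ ℝ ℝ +
        (Real.sin q.2 / (2 * wf q)) • ContinuousLinearMap.snd ℝ ℝ ℝ :=
  (hasFDerivAt_rwPhase2 q h).fderiv


lemma hasFDerivAt_m (p : ℝ × ℝ) :
    HasFDerivAt (fun q : ℝ × ℝ => 1 - uf q ^ 2)
      ((uf p * Real.sin p.1) • ContinuousLinearMap.fst ℝ ℝ ℝ +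
        (uf p * Real.sin p.2) • ContinuousLinearMap.snd ℝ ℝ ℝ) p := by
  have h2 := (hasFDerivAt_const (1 : ℝ) p).sub ((hasFDerivAt_uf p).mul (hasFDerivAt_uf p))
  have hfun : (fun q : ℝ × ℝ => 1 - uf q ^ 2) = fun q => 1 - uf q * uf q := by
    funext q; ring
  rw [hfun]
  refine h2.congr_fderiv ?_
  ext <;> simp <;> ring

lemma hasFDerivAt_wf (p : ℝ × ℝ) (h : Real.cos p.1 ≠ Real.cos p.2) :
    HasFDerivAt wf
      ((uf p * Real.sin p.1 / (2 * wf p)) • ContinuousLinearMap.fst ℝ ℝ ℝ +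
        (uf p * Real.sin p.2 / (2 * wf p)) • ContinuousLinearMap.snd ℝ ℝ ℝ) p := by
  have hm0 : 1 - uf p ^ 2 ≠ 0 := by
    have := uf_lt p h; intro hc; nlinarith
  have h2 := (Real.hasDerivAt_sqrt hm0).comp_hasFDerivAt p (hasFDerivAt_m p)
  refine HasFDerivAt.congr_fderiv h2 ?_
  have : Real.sqrt (1 - uf p ^ 2) = wf p := rfl
  ext <;> simp [this] <;> ring

lemma hasFDerivAt_inv2wf (p : ℝ × ℝ) (h : Real.cos p.1 ≠ Real.cos p.2) :
    HasFDerivAt (fun q => (2 * wf q)⁻¹)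
      ((-(uf p * Real.sin p.1) / (4 * wf p ^ 3)) • ContinuousLinearMap.fst ℝ ℝ ℝ +
        (-(uf p * Real.sin p.2) / (4 * wf p ^ 3)) • ContinuousLinearMap.snd ℝ ℝ ℝ) p := by
  have hw := wf_pos p h
  have hne : (2 * wf p) ≠ 0 := by positivity
  have h2 := (hasDerivAt_inv hne).comp_hasFDerivAt p ((hasFDerivAt_wf p h).const_mul 2)
  refine HasFDerivAt.congr_fderiv h2 ?_
  have hwne : wf p ≠ 0 := ne_of_gt hw
  ext <;> simp <;> field_simp <;> ring

lemma hasFDerivAt_G1 (p : ℝ × ℝ) (h : Real.cos p.1 ≠ Real.cos p.2) :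
    HasFDerivAt (fun q : ℝ × ℝ => Real.sin q.1 / (2 * wf q))
      ((Real.cos p.1 / (2 * wf p) - uf p * Real.sin p.1 ^ 2 / (4 * wf p ^ 3)) •
          ContinuousLinearMap.fst ℝ ℝ ℝ +
        (-(uf p * Real.sin p.1 * Real.sin p.2) / (4 * wf p ^ 3)) •
          ContinuousLinearMap.snd ℝ ℝ ℝ) p := by
  have hs : HasFDerivAt (fun q : ℝ × ℝ => Real.sin q.1)
      ((Real.cos p.1) • ContinuousLinearMap.fst ℝ ℝ ℝ) p :=
    (Real.hasDerivAt_sin p.1).comp_hasFDerivAt p hasFDerivAt_fst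
  have h2 := hs.mul (hasFDerivAt_inv2wf p h)
  have hfun : (fun q : ℝ × ℝ => Real.sin q.1 / (2 * wf q)) =
      fun q : ℝ × ℝ => Real.sin q.1 * (2 * wf q)⁻¹ := by
    funext q; rw [div_eq_mul_inv]
  rw [hfun]
  refine HasFDerivAt.congr_fderiv h2 ?_
  have hwne : wf p ≠ 0 := ne_of_gt (wf_pos p h)
  ext <;> simp <;> field_simp <;> ring

lemma hasFDerivAt_G2 (p : ℝ × ℝ) (h : Real.cos p.1 ≠ Real.cos p.2) :
    HasFDerivAt (fun q : ℝ × ℝ => Real.sin q.2 / (2 * wf q))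
      ((-(uf p * Real.sin p.1 * Real.sin p.2) / (4 * wf p ^ 3)) •
          ContinuousLinearMap.fst ℝ ℝ ℝ +
        (Real.cos p.2 / (2 * wf p) - uf p * Real.sin p.2 ^ 2 / (4 * wf p ^ 3)) •
          ContinuousLinearMap.snd ℝ ℝ ℝ) p := by
  have hs : HasFDerivAt (fun q : ℝ × ℝ => Real.sin q.2)
      ((Real.cos p.2) • ContinuousLinearMap.snd ℝ ℝ ℝ) p :=
    (Real.hasDerivAt_sin p.2).comp_hasFDerivAt p hasFDerivAt_snd
  have h2 := hs.mul (hasFDerivAt_inv2wf p h)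
  have hfun : (fun q : ℝ × ℝ => Real.sin q.2 / (2 * wf q)) =
      fun q : ℝ × ℝ => Real.sin q.2 * (2 * wf q)⁻¹ := by
    funext q; rw [div_eq_mul_inv]
  rw [hfun]
  refine HasFDerivAt.congr_fderiv h2 ?_
  have hwne : wf p ≠ 0 := ne_of_gt (wf_pos p h)
  ext <;> simp <;> field_simp <;> ring

theorem rwPhase2_hessian_det (k l : ℝ) (h : Real.cos k ≠ Real.cos l) :
    let φ := rwPhase2 (k, l)
    let x := Real.sin k / (2 * Real.sin φ)
    let y := Real.sin l / (2 * Real.sin φ)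
    x ^ 2 + y ^ 2 < 1 / 2 ∧
    (hessian2 rwPhase2 (k, l)).det
      = -(1 / 4) * (1 - (x + y) ^ 2) * (1 - (x - y) ^ 2) ∧
    (hessian2 rwPhase2 (k, l)).det
      = -(1 / 4) * (x + y - 1) * (x + y + 1) * (x - y + 1) * (x - y - 1) ∧
    (hessian2 rwPhase2 (k, l)).det < 0 := by
  intro φ x y
  set p : ℝ × ℝ := (k, l) with hp
  have hpk : p.1 = k := rfl
  have hpl : p.2 = l := rfl
  have hph : Real.cos p.1 ≠ Real.cos p.2 := h
  have hw := wf_pos p hph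
  have hwne : wf p ≠ 0 := ne_of_gt hw
  have hw2 : wf p ^ 2 = 1 - uf p ^ 2 := wf_sq p hph
  have hsinφ : Real.sin φ = wf p := by
    show Real.sin (Real.arccos ((Real.cos k + Real.cos l) / 2)) = wf p
    rw [Real.sin_arccos]; rfl
  have hxv : x = Real.sin k / (2 * wf p) := by
    show Real.sin k / (2 * Real.sin φ) = _
    rw [hsinφ]
  have hyv : y = Real.sin l / (2 * wf p) := by
    show Real.sin l / (2 * Real.sin φ) = _
    rw [hsinφ]
  clear_value x y
  subst hxv hyv
  -- the open set where the first derivative formula holds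
  have hS : IsOpen {q : ℝ × ℝ | Real.cos q.1 ≠ Real.cos q.2} :=
    isOpen_ne_fun (by fun_prop) (by fun_prop)
  have hmem : {q : ℝ × ℝ | Real.cos q.1 ≠ Real.cos q.2} ∈ nhds p := hS.mem_nhds h
  have hev0 : (fun q => fderiv ℝ rwPhase2 q (basis2 0)) =ᶠ[nhds p]
      fun q : ℝ × ℝ => Real.sin q.1 / (2 * wf q) := by
    filter_upwards [hmem] with q hq
    rw [fderiv_rwPhase2 q hq]
    simp [basis2]
  have hev1 : (fun q => fderiv ℝ rwPhase2 q (basis2 1)) =ᶠ[nhds p]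
      fun q : ℝ × ℝ => Real.sin q.2 / (2 * wf q) := by
    filter_upwards [hmem] with q hq
    rw [fderiv_rwPhase2 q hq]
    simp [basis2]
  set u := uf p with hu
  set w := wf p with hwdef
  set s1 := Real.sin k with hs1def
  set s2 := Real.sin l with hs2def
  set c1 := Real.cos k with hc1def
  set c2 := Real.cos l with hc2def
  have e00 : hessian2 rwPhase2 p 0 0 = c1 / (2 * w) - u * s1 ^ 2 / (4 * w ^ 3) := by
    show fderiv ℝ (fun q => fderiv ℝ rwPhase2 q (basis2 0)) p (basis2 0) = _
    rw [hev0.fderiv_eq, (hasFDerivAt_G1 p hph).fderiv]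
    simp [basis2]
    rfl
  have e01 : hessian2 rwPhase2 p 0 1 = -(u * s1 * s2) / (4 * w ^ 3) := by
    show fderiv ℝ (fun q => fderiv ℝ rwPhase2 q (basis2 1)) p (basis2 0) = _
    rw [hev1.fderiv_eq, (hasFDerivAt_G2 p hph).fderiv]
    simp [basis2]
    rfl
  have e10 : hessian2 rwPhase2 p 1 0 = -(u * s1 * s2) / (4 * w ^ 3) := by
    show fderiv ℝ (fun q => fderiv ℝ rwPhase2 q (basis2 0)) p (basis2 1) = _
    rw [hev0.fderiv_eq, (hasFDerivAt_G1 p hph).fderiv]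
    simp [basis2]
    rfl
  have e11 : hessian2 rwPhase2 p 1 1 = c2 / (2 * w) - u * s2 ^ 2 / (4 * w ^ 3) := by
    show fderiv ℝ (fun q => fderiv ℝ rwPhase2 q (basis2 1)) p (basis2 1) = _
    rw [hev1.fderiv_eq, (hasFDerivAt_G2 p hph).fderiv]
    simp [basis2]
    rfl
  have hdet : (hessian2 rwPhase2 p).det
      = (c1 / (2 * w) - u * s1 ^ 2 / (4 * w ^ 3)) * (c2 / (2 * w) - u * s2 ^ 2 / (4 * w ^ 3))
        - (-(u * s1 * s2) / (4 * w ^ 3)) * (-(u * s1 * s2) / (4 * w ^ 3)) := by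
    rw [Matrix.det_fin_two, e00, e01, e10, e11]
  -- basic trigonometric relations
  have hs1sq : s1 ^ 2 = 1 - c1 ^ 2 := by
    rw [hs1def, hc1def, Real.sin_sq]
  have hs2sq : s2 ^ 2 = 1 - c2 ^ 2 := by
    rw [hs2def, hc2def, Real.sin_sq]
  have huval : u = (c1 + c2) / 2 := rfl
  have hcne : c1 ≠ c2 := h
  have hcsq : (c1 - c2) ^ 2 > 0 := by
    have : c1 - c2 ≠ 0 := sub_ne_zero.2 hcne
    positivity
  have hu2 : u ^ 2 = (c1 ^ 2 + 2 * c1 * c2 + c2 ^ 2) / 4 := by rw [huval]; ring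
  clear_value u w s1 s2 c1 c2
  clear hev0 hev1 hmem hS hsinφ hu hwdef hs1def hs2def hc1def hc2def hp hpk hpl hph
  -- part 1 : x² + y² < 1/2
  have part1 : (s1 / (2 * w)) ^ 2 + (s2 / (2 * w)) ^ 2 < 1 / 2 := by
    rw [div_pow, div_pow, ← add_div, div_lt_iff₀ (by positivity)]
    nlinarith [hcsq, hs1sq, hs2sq, hw2, hu2]
  -- part 2 : determinant identity
  have hA : (hessian2 rwPhase2 p).det
      = (4 * c1 * c2 * w ^ 2 - 2 * u * (c1 * s2 ^ 2 + c2 * s1 ^ 2)) / (16 * w ^ 4) := by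
    rw [hdet]; field_simp; ring
  have hnum : 4 * c1 * c2 * w ^ 2 - 2 * u * (c1 * s2 ^ 2 + c2 * s1 ^ 2) = -((c1 - c2) ^ 2) := by
    rw [hw2, hs1sq, hs2sq, huval]; ring
  have hdet2 : (hessian2 rwPhase2 p).det = -((c1 - c2) ^ 2) / (16 * w ^ 4) := by
    rw [hA, hnum]
  have hnum2 : (4 * w ^ 2 - (s1 + s2) ^ 2) * (4 * w ^ 2 - (s1 - s2) ^ 2)
      = 4 * (c1 - c2) ^ 2 := by
    have e : (4 * w ^ 2 - (s1 + s2) ^ 2) * (4 * w ^ 2 - (s1 - s2) ^ 2)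
        = 16 * (w ^ 2) ^ 2 - 8 * (w ^ 2) * (s1 ^ 2 + s2 ^ 2) + (s1 ^ 2 - s2 ^ 2) ^ 2 := by
      ring
    rw [e, hw2, hs1sq, hs2sq, huval]; ring
  have hR : -(1 / 4) * (1 - (s1 / (2 * w) + s2 / (2 * w)) ^ 2)
        * (1 - (s1 / (2 * w) - s2 / (2 * w)) ^ 2)
      = -((4 * w ^ 2 - (s1 + s2) ^ 2) * (4 * w ^ 2 - (s1 - s2) ^ 2)) / (64 * w ^ 4) := by
    field_simp; ring
  have part2 : (hessian2 rwPhase2 p).det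
      = -(1 / 4) * (1 - (s1 / (2 * w) + s2 / (2 * w)) ^ 2)
          * (1 - (s1 / (2 * w) - s2 / (2 * w)) ^ 2) := by
    rw [hdet2, hR, hnum2]; ring
  set X := s1 / (2 * w) with hX
  set Y := s2 / (2 * w) with hY
  clear_value X Y
  clear hA hnum hdet2 hnum2 hR hdet e00 e01 e10 e11 hw2 hs1sq hs2sq huval hu2 hcsq hcne h hX hY
  refine ⟨part1, part2, ?_, ?_⟩
  · rw [part2]; ring
  · rw [part2]
    have hxy1 : (X + Y) ^ 2 < 1 := by nlinarith [part1, sq_nonneg (X - Y)]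
    have hxy2 : (X - Y) ^ 2 < 1 := by nlinarith [part1, sq_nonneg (X + Y)]
    nlinarith [hxy1, hxy2]
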